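/- Let 0 < p < n+1 and c, v > 0. The sequence indexed by pairs (k,i), k > N, 1 ≤ i ≤ ⌈c·2^{k(n+1)}⌉, with value 2^{−k}v at (k,i), does not belong to weak-ℓ^p (= ℓ^{p,∞}): sup_{λ>0} λ · (#{(k,i) : 2^{−k}v > λ})^{1/p} = +∞. -/

import Mathlib

open ENNReal

/-- for `0 < p < n+1` and `c, v > 0`, the sequence indexed by pairs `(k, i)` with
`k > N` and `1 ≤ i ≤ ⌈c 2^{k(n+1)}⌉`, taking the value `2^{-k} v` at `(k,i)`, does not lie in
weak-`ℓ^p`: `sup_{λ>0} λ (#{(k,i) : 2^{-k}v > λ})^{1/p} = ∞`. -/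
theorem stmt11 (n : ℕ) (p c v : ℝ) (hp0 : 0 < p) (hp : p < (n : ℝ) + 1)
    (hc : 0 < c) (hv : 0 < v) (N : ℤ) :
    (⨆ (l : ℝ) (_ : 0 < l),
        ENNReal.ofReal l *
          (Set.ncard {x : ℤ × ℕ | N < x.1 ∧ 1 ≤ x.2 ∧
              (x.2 : ℤ) ≤ ⌈c * (2 : ℝ) ^ (x.1 * ((n : ℤ) + 1))⌉ ∧
              l < (2 : ℝ) ^ (-x.1) * v} : ℝ≥0∞) ^ (1 / p)) = ⊤ := by
  set δ : ℝ := ((n : ℝ) + 1) / p - 1 with hδdef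
  have hδ : 0 < δ := sub_pos.2 ((one_lt_div hp0).2 hp)
  rw [iSup_eq_top]
  intro b hb
  set r : ℝ := (2 : ℝ) ^ δ with hr
  have hr1 : 1 < r := by
    rw [hr]
    exact (Real.one_lt_rpow_iff_of_pos two_pos).2 (Or.inl ⟨one_lt_two, hδ⟩)
  set C : ℝ := v * c ^ (1 / p) * (2 : ℝ) ^ (((N : ℝ) + 1) * δ) / 2 with hC
  have hCpos : 0 < C := by rw [hC]; positivity
  obtain ⟨j, hj⟩ := pow_unbounded_of_one_lt (b.toReal / C) hr1
  set K : ℤ := N + 1 + (j : ℤ) with hK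
  have hNK : N < K := by
    have : (0 : ℤ) ≤ (j : ℤ) := Int.ofNat_nonneg j
    omega
  set l : ℝ := (2 : ℝ) ^ (-(K + 1)) * v with hl
  have hlpos : 0 < l := by rw [hl]; positivity
  refine ⟨l, ?_⟩
  rw [iSup_pos hlpos]
  set y : ℝ := c * (2 : ℝ) ^ (K * ((n : ℤ) + 1)) with hy
  have hypos : 0 < y := by rw [hy]; positivity
  set m : ℤ := ⌈y⌉ with hm
  have hmpos : 0 < m := by rw [hm]; exact Int.ceil_pos.2 hypos
  set S : Set (ℤ × ℕ) := {x : ℤ × ℕ | N < x.1 ∧ 1 ≤ x.2 ∧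
      (x.2 : ℤ) ≤ ⌈c * (2 : ℝ) ^ (x.1 * ((n : ℤ) + 1))⌉ ∧
      l < (2 : ℝ) ^ (-x.1) * v} with hS
  have hsub1 : S ⊆ ↑((Finset.Icc (N + 1) K) ×ˢ (Finset.Icc 1 m.toNat)) := by
    rintro ⟨k, i⟩ ⟨h1, h2, h3, h4⟩
    have hkK : k ≤ K := by
      have h5 : (2 : ℝ) ^ (-(K + 1)) < (2 : ℝ) ^ (-k) := by
        rw [hl] at h4
        exact (mul_lt_mul_iff_of_pos_right hv).1 h4
      have := (zpow_lt_zpow_iff_right₀ (one_lt_two : (1:ℝ) < 2)).1 h5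
      omega
    have hi : (i : ℤ) ≤ m := by
      refine h3.trans ?_
      rw [hm, hy]
      apply Int.ceil_le_ceil
      have h6 : (2 : ℝ) ^ (k * ((n : ℤ) + 1)) ≤ (2 : ℝ) ^ (K * ((n : ℤ) + 1)) :=
        zpow_le_zpow_right₀ one_le_two (mul_le_mul_of_nonneg_right hkK (by positivity))
      nlinarith
    simp only [Finset.coe_product, Set.mem_prod, Finset.mem_coe, Finset.mem_Icc]
    exact ⟨⟨by omega, hkK⟩, h2, by omega⟩
  have hSfin : S.Finite := Set.Finite.subset (Finset.finite_toSet _) hsub1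
  have hsub2 : ↑(({K} : Finset ℤ) ×ˢ Finset.Icc 1 m.toNat) ⊆ S := by
    rintro ⟨k, i⟩ hx
    simp only [Finset.coe_product, Set.mem_prod, Finset.mem_coe, Finset.mem_singleton,
      Finset.mem_Icc] at hx
    obtain ⟨hk, hi1, hi2⟩ := hx
    subst hk
    refine ⟨hNK, hi1, ?_, ?_⟩
    · show (i : ℤ) ≤ ⌈c * (2 : ℝ) ^ (K * ((n : ℤ) + 1))⌉
      rw [← hy, ← hm]
      omega
    · show l < (2 : ℝ) ^ (-K) * v
      rw [hl]
      have : (2 : ℝ) ^ (-(K + 1)) < (2 : ℝ) ^ (-K) :=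
        (zpow_lt_zpow_iff_right₀ (one_lt_two : (1:ℝ) < 2)).2 (by omega)
      exact mul_lt_mul_of_pos_right this hv
  have hcard : m.toNat ≤ S.ncard := by
    have h := Set.ncard_le_ncard hsub2 hSfin
    rwa [Set.ncard_coe_finset, Finset.card_product, Finset.card_singleton, Nat.card_Icc,
      one_mul, Nat.add_sub_cancel] at h
  have hK' : (K : ℝ) = (N : ℝ) + 1 + (j : ℝ) := by rw [hK]; push_cast; ring
  have e1 : C * r ^ j = v * c ^ (1 / p) * (2 : ℝ) ^ (((N : ℝ) + 1) * δ + δ * (j : ℝ) - 1) := by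
    have h1 : ((2 : ℝ) ^ δ) ^ j = (2 : ℝ) ^ (δ * (j : ℝ)) := by
      rw [← Real.rpow_natCast ((2 : ℝ) ^ δ) j, ← Real.rpow_mul (by norm_num : (0:ℝ) ≤ 2)]
    rw [hC, hr, h1, Real.rpow_sub two_pos, Real.rpow_add two_pos, Real.rpow_one]
    ring
  have e2 : l * y ^ (1 / p)
      = v * c ^ (1 / p) * (2 : ℝ) ^ ((-(K : ℝ) - 1) + ((K : ℝ) * ((n : ℝ) + 1)) / p) := by
    have h1 : (2 : ℝ) ^ (-(K + 1) : ℤ) = (2 : ℝ) ^ (-(K : ℝ) - 1) := by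
      rw [← Real.rpow_intCast 2 (-(K + 1))]
      push_cast
      ring_nf
    have h2 : ((2 : ℝ) ^ (K * ((n : ℤ) + 1))) ^ (1 / p)
        = (2 : ℝ) ^ (((K : ℝ) * ((n : ℝ) + 1)) / p) := by
      rw [← Real.rpow_intCast 2 (K * ((n : ℤ) + 1)),
        ← Real.rpow_mul (by norm_num : (0:ℝ) ≤ 2)]
      push_cast
      ring_nf
    rw [hl, hy, Real.mul_rpow hc.le (by positivity), h1, h2, Real.rpow_add two_pos]
    ring
  have e3 : ((N : ℝ) + 1) * δ + δ * (j : ℝ) - 1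
      = (-(K : ℝ) - 1) + ((K : ℝ) * ((n : ℝ) + 1)) / p := by
    rw [hK', hδdef]
    field_simp
    ring
  have e4 : C * r ^ j = l * y ^ (1 / p) := by rw [e1, e2, e3]
  have hb1 : b.toReal < C * r ^ j := by
    have h := (div_lt_iff₀ hCpos).1 hj
    linarith
  have hb2 : b < ENNReal.ofReal (l * y ^ (1 / p)) := by
    rw [← e4]
    exact (ENNReal.lt_ofReal_iff_toReal_lt hb.ne).2 hb1
  have hy' : y ≤ (m.toNat : ℝ) := by
    have h1 : y ≤ (m : ℝ) := by rw [hm]; exact Int.le_ceil y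
    have h2 : (m.toNat : ℤ) = m := Int.toNat_of_nonneg hmpos.le
    have h3 : ((m.toNat : ℤ) : ℝ) = (m : ℝ) := by exact_mod_cast h2
    push_cast at h3
    linarith
  have hle : ENNReal.ofReal (l * y ^ (1 / p))
      ≤ ENNReal.ofReal l * (S.ncard : ℝ≥0∞) ^ (1 / p) := by
    rw [ENNReal.ofReal_mul hlpos.le, ← ENNReal.ofReal_rpow_of_pos hypos]
    refine mul_le_mul_right ?_ _
    refine ENNReal.rpow_le_rpow ?_ (one_div_pos.2 hp0).le
    calc ENNReal.ofReal y ≤ ENNReal.ofReal (m.toNat : ℝ) := ENNReal.ofReal_le_ofReal hy'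
      _ = (m.toNat : ℝ≥0∞) := ENNReal.ofReal_natCast _
      _ ≤ (S.ncard : ℝ≥0∞) := Nat.cast_le.2 hcard
  exact hb2.trans_le hle
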